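/- Let F(X) = A^T (Ω + H (Ψ + K X K^T)^{-1} H^T)^{-1} A with Ω, Ψ symmetric positive definite and A having trivial kernel. For any positive definite X and any scalar α > 1, one has α·F(X) ≻ F(α·X), i.e., α·F(X) - F(α·X) is positive definite. -/

import Mathlib

open Matrix

lemma smul_posDef {k : ℕ} {M : Matrix (Fin k) (Fin k) ℝ} (hM : M.PosDef)
    {c : ℝ} (hc : 0 < c) : (c • M).PosDef := by
  refine posDef_iff_dotProduct_mulVec.mpr ⟨?_, fun x hx => ?_⟩
  · unfold Matrix.IsHermitian
    rw [conjTranspose_smul, hM.1.eq]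
    simp
  · rw [smul_mulVec, dotProduct_smul, smul_eq_mul]
    exact mul_pos hc (hM.dotProduct_mulVec_pos hx)

/-- Core lemma: strict antitonicity of the inverse on PD matrices. -/
lemma inv_sub_inv_posDef {k : ℕ} {A B : Matrix (Fin k) (Fin k) ℝ}
    (hA : A.PosDef) (hB : B.PosDef) (hD : (B - A).PosDef) :
    (A⁻¹ - B⁻¹).PosDef := by
  have hAt : Aᵀ = A := by
    rw [← conjTranspose_eq_transpose_of_trivial]; exact hA.1
  refine posDef_iff_dotProduct_mulVec.mpr ⟨hA.inv.1.sub hB.inv.1, fun x hx => ?_⟩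
  set u := A⁻¹ *ᵥ x with hu
  set v := B⁻¹ *ᵥ x with hv
  have hAu : A *ᵥ u = x := by
    rw [hu, mulVec_mulVec, Matrix.mul_nonsing_inv _ hA.det_pos.ne'.isUnit, one_mulVec]
  have hBv : B *ᵥ v = x := by
    rw [hv, mulVec_mulVec, Matrix.mul_nonsing_inv _ hB.det_pos.ne'.isUnit, one_mulVec]
  have hsym : ∀ a b : Fin k → ℝ, a ⬝ᵥ (A *ᵥ b) = (A *ᵥ a) ⬝ᵥ b := fun a b => by
    rw [dotProduct_mulVec, ← hAt, mulVec_transpose, hAt]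
  have key : x ⬝ᵥ ((A⁻¹ - B⁻¹) *ᵥ x)
      = (u - v) ⬝ᵥ (A *ᵥ (u - v)) + v ⬝ᵥ ((B - A) *ᵥ v) := by
    simp only [sub_mulVec, mulVec_sub, dotProduct_sub, sub_dotProduct, hAu, hBv]
    rw [hsym u v, hAu, dotProduct_comm u x]
    ring
  have h1 : 0 ≤ (u - v) ⬝ᵥ (A *ᵥ (u - v)) := by
    have := hA.posSemidef.dotProduct_mulVec_nonneg (u - v); simpa using this
  have hvne : v ≠ 0 := fun h => hx (by rw [← hBv, h, mulVec_zero])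
  have h2 : 0 < v ⬝ᵥ ((B - A) *ᵥ v) := by simpa using hD.dotProduct_mulVec_pos hvne
  have hpos : 0 < x ⬝ᵥ ((A⁻¹ - B⁻¹) *ᵥ x) := by rw [key]; linarith
  simpa using hpos

lemma conj_posDef {k l : ℕ} {D : Matrix (Fin k) (Fin k) ℝ} (hD : D.PosDef)
    (A : Matrix (Fin k) (Fin l) ℝ) (hA : ∀ v : Fin l → ℝ, A.mulVec v = 0 → v = 0) :
    (Aᵀ * D * A).PosDef := by
  have hDt : Dᵀ = D := by
    rw [← conjTranspose_eq_transpose_of_trivial]; exact hD.1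
  refine posDef_iff_dotProduct_mulVec.mpr ⟨?_, fun x hx => ?_⟩
  · unfold Matrix.IsHermitian
    simp [conjTranspose_mul, conjTranspose_eq_transpose_of_trivial, hDt, Matrix.mul_assoc]
  · have e : x ⬝ᵥ ((Aᵀ * D * A) *ᵥ x) = (A *ᵥ x) ⬝ᵥ (D *ᵥ (A *ᵥ x)) := by
      rw [Matrix.mul_assoc, ← mulVec_mulVec, dotProduct_mulVec, vecMul_transpose,
        ← mulVec_mulVec]
    have hAx : A *ᵥ x ≠ 0 := fun h => hx (hA x h)
    have := hD.dotProduct_mulVec_pos hAx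
    simpa [e] using this

lemma conj_posSemidef {k l : ℕ} {D : Matrix (Fin k) (Fin k) ℝ} (hD : D.PosSemidef)
    (A : Matrix (Fin l) (Fin k) ℝ) : (A * D * Aᵀ).PosSemidef := by
  have := hD.mul_mul_conjTranspose_same A
  rwa [conjTranspose_eq_transpose_of_trivial] at this

/-- Strict subhomogeneity: for F(X) = Aᵀ (Ω + H (Ψ + K X Kᵀ)⁻¹ Hᵀ)⁻¹ A with A injective,
X ≻ 0 and α > 1, one has α • F(X) ≻ F(α • X). -/
theorem gbp_update_strict_subhom {n m p q : ℕ}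
    (A : Matrix (Fin m) (Fin n) ℝ) (Ω : Matrix (Fin m) (Fin m) ℝ)
    (H : Matrix (Fin m) (Fin p) ℝ) (Ψ : Matrix (Fin p) (Fin p) ℝ)
    (K : Matrix (Fin p) (Fin q) ℝ)
    (hΩ : Ω.PosDef) (hΨ : Ψ.PosDef)
    (hA : ∀ v : Fin n → ℝ, A.mulVec v = 0 → v = 0)
    (X : Matrix (Fin q) (Fin q) ℝ) (hX : X.PosDef)
    (α : ℝ) (hα : 1 < α) :
    (α • (Aᵀ * (Ω + H * (Ψ + K * X * Kᵀ)⁻¹ * Hᵀ)⁻¹ * A)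
      - (Aᵀ * (Ω + H * (Ψ + K * (α • X) * Kᵀ)⁻¹ * Hᵀ)⁻¹ * A)).PosDef := by
  have hα0 : (0:ℝ) < α := lt_trans one_pos hα
  set S := Ψ + K * X * Kᵀ with hS_def
  set Sα := Ψ + K * (α • X) * Kᵀ with hSα_def
  have hS : S.PosDef := hΨ.add_posSemidef (conj_posSemidef hX.posSemidef K)
  have hSα : Sα.PosDef :=
    hΨ.add_posSemidef (conj_posSemidef (smul_posDef hX hα0).posSemidef K)
  -- Step A : Sα⁻¹ - α⁻¹ • S⁻¹ is PD
  have ediff : α • S - Sα = (α - 1) • Ψ := by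
    rw [hS_def, hSα_def]
    simp only [smul_add, Matrix.mul_smul, Matrix.smul_mul, sub_smul, one_smul]
    abel
  have hdiff : (α • S - Sα).PosDef := ediff ▸ smul_posDef hΨ (by linarith)
  have hstepA' : (Sα⁻¹ - (α • S)⁻¹).PosDef :=
    inv_sub_inv_posDef hSα (smul_posDef hS hα0) hdiff
  have esmulinv : (α • S)⁻¹ = α⁻¹ • S⁻¹ := by
    letI := invertibleOfNonzero hα0.ne'
    rw [Matrix.inv_smul (A := S) α hS.det_pos.ne'.isUnit, invOf_eq_inv]
  have hstepA : (Sα⁻¹ - α⁻¹ • S⁻¹).PosDef := esmulinv ▸ hstepA'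
  -- Step B : Mα - α⁻¹ • M is PD
  set M := Ω + H * S⁻¹ * Hᵀ with hM_def
  set Mα := Ω + H * Sα⁻¹ * Hᵀ with hMα_def
  have hM : M.PosDef := hΩ.add_posSemidef (conj_posSemidef hS.posSemidef.inv H)
  have hMα : Mα.PosDef := hΩ.add_posSemidef (conj_posSemidef hSα.posSemidef.inv H)
  have ediff2 : Mα - α⁻¹ • M = (1 - α⁻¹) • Ω + H * (Sα⁻¹ - α⁻¹ • S⁻¹) * Hᵀ := by
    rw [hM_def, hMα_def]
    simp only [smul_add, Matrix.mul_sub, Matrix.sub_mul, Matrix.mul_smul, Matrix.smul_mul,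
      sub_smul, one_smul]
    abel
  have hαinv : (0:ℝ) < 1 - α⁻¹ := by
    have : α⁻¹ < 1 := by rw [inv_lt_one_iff₀]; right; exact hα
    linarith
  have hdiff2 : (Mα - α⁻¹ • M).PosDef := by
    rw [ediff2]
    exact (smul_posDef hΩ hαinv).add_posSemidef (conj_posSemidef hstepA.posSemidef H)
  -- Step C
  have hstepC' : ((α⁻¹ • M)⁻¹ - Mα⁻¹).PosDef :=
    inv_sub_inv_posDef (smul_posDef hM (inv_pos.mpr hα0)) hMα hdiff2
  have esmulinv2 : (α⁻¹ • M)⁻¹ = α • M⁻¹ := by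
    letI := invertibleOfNonzero (inv_pos.mpr hα0).ne'
    rw [Matrix.inv_smul (A := M) α⁻¹ hM.det_pos.ne'.isUnit, invOf_eq_inv, inv_inv]
  have hstepC : (α • M⁻¹ - Mα⁻¹).PosDef := esmulinv2 ▸ hstepC'
  have efin : α • (Aᵀ * M⁻¹ * A) - Aᵀ * Mα⁻¹ * A = Aᵀ * (α • M⁻¹ - Mα⁻¹) * A := by
    simp only [Matrix.mul_sub, Matrix.sub_mul, Matrix.mul_smul, Matrix.smul_mul]
  rw [efin]
  exact conj_posDef hstepC A hA
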